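/- Fix an integer k ≥ 1 and m > 0, and let Ψ(u) = ∫_0^u exp(−(m/(k+1)) t^{k+1}) dt and C_β = ∫_0^∞ exp(−(m/(k+1)) t^{k+1}) dt. For s ∈ (0,1) let t_s ≥ 0 be the unique nonnegative real number with Ψ(t_s) = (1−s) C_β. Then t_s^{k+1} / (−ln s) → (k+1)/m as s → 0⁺. -/

import Mathlib

open MeasureTheory Filter Set
open scoped Topology

/-- `Ψ(u) = ∫₀ᵘ exp(−(m/(k+1)) t^{k+1}) dt`, the change of variables in the model case
`β(s) = s^k`. -/
noncomputable def PsiK (k : ℕ) (m : ℝ) (u : ℝ) : ℝ :=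
  ∫ t in (0:ℝ)..u, Real.exp (-(m / ((k:ℝ) + 1)) * t ^ (k + 1))

/-- `C_β = ∫₀^∞ exp(−(m/(k+1)) t^{k+1}) dt`. -/
noncomputable def CbetaK (k : ℕ) (m : ℝ) : ℝ :=
  ∫ t in Set.Ioi (0:ℝ), Real.exp (-(m / ((k:ℝ) + 1)) * t ^ (k + 1))


lemma aux_int (k : ℕ) {m : ℝ} (hm : 0 < m) :
    IntegrableOn (fun t : ℝ => Real.exp (-(m / ((k:ℝ) + 1)) * t ^ (k + 1))) (Ioi 0) := by
  have h := integrableOn_rpow_mul_exp_neg_mul_rpow (s := 0) (p := (k:ℝ)+1) (b := m/((k:ℝ)+1))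
    (by norm_num) (by push_cast; linarith [Nat.cast_nonneg (α := ℝ) k]) (by positivity)
  refine h.congr_fun (fun x hx => ?_) measurableSet_Ioi
  beta_reduce
  rw [Real.rpow_zero, one_mul, neg_mul, neg_mul]
  congr 2
  rw [← Real.rpow_natCast x (k+1)]
  push_cast
  ring_nf

-- derivative of u ↦ exp(-(m/(k+1)) u^(k+1))
lemma aux_deriv_exp (k : ℕ) (m : ℝ) (u : ℝ) :
    HasDerivAt (fun u : ℝ => Real.exp (-(m / ((k:ℝ)+1)) * u ^ (k+1)))
      (-m * u ^ k * Real.exp (-(m / ((k:ℝ)+1)) * u ^ (k+1))) u := by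
  have h1 : HasDerivAt (fun u : ℝ => -(m / ((k:ℝ)+1)) * u ^ (k+1))
      (-(m / ((k:ℝ)+1)) * (((k:ℕ)+1 : ℕ) * u ^ k)) u := by
    simpa using ((hasDerivAt_pow (k+1) u)).const_mul (-(m / ((k:ℝ)+1)))
  have := (Real.hasDerivAt_exp _).comp u h1
  refine this.congr_deriv ?_
  have hk1 : ((k:ℝ)+1) ≠ 0 := by positivity
  push_cast
  field_simp

-- tendsto of exp part
lemma aux_exp_tendsto (k : ℕ) {m : ℝ} (hm : 0 < m) :
    Tendsto (fun u : ℝ => Real.exp (-(m / ((k:ℝ)+1)) * u ^ (k+1))) atTop (𝓝 0) := by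
  apply Real.tendsto_exp_atBot.comp
  have h1 : Tendsto (fun u : ℝ => u ^ (k+1)) atTop atTop := tendsto_pow_atTop (Nat.succ_ne_zero k)
  have h2 : Tendsto (fun u : ℝ => (m / ((k:ℝ)+1)) * u ^ (k+1)) atTop atTop :=
    h1.const_mul_atTop (by positivity)
  have := tendsto_neg_atTop_atBot.comp h2
  simpa [Function.comp_def, neg_mul] using this
section
variable {k : ℕ} {m t : ℝ}

lemma aux_d1 (hm : 0 < m) (ht : 0 < t) {u : ℝ} :
    HasDerivAt (fun u : ℝ => -Real.exp (-(m / ((k:ℝ)+1)) * u ^ (k+1)) / (m * t ^ k))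
      (u ^ k / t ^ k * Real.exp (-(m / ((k:ℝ)+1)) * u ^ (k+1))) u := by
  have := ((aux_deriv_exp k m u).neg).div_const (m * t ^ k)
  refine this.congr_deriv ?_
  have h1 : (m : ℝ) ≠ 0 := hm.ne'
  have h2 : t ^ k ≠ 0 := by positivity
  field_simp

lemma aux_tendsto1 (hm : 0 < m) (ht : 0 < t) :
    Tendsto (fun u : ℝ => -Real.exp (-(m / ((k:ℝ)+1)) * u ^ (k+1)) / (m * t ^ k))
      atTop (𝓝 0) := by
  have := ((aux_exp_tendsto k hm).neg).div_const (m * t ^ k)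
  simpa using this

lemma aux_L1 (hm : 0 < m) (ht : 0 < t) :
    (∫ u in Ioi t, u ^ k / t ^ k * Real.exp (-(m / ((k:ℝ)+1)) * u ^ (k+1)))
      = Real.exp (-(m / ((k:ℝ)+1)) * t ^ (k+1)) / (m * t ^ k) := by
  have h := integral_Ioi_of_hasDerivAt_of_nonneg'
    (g := fun u : ℝ => -Real.exp (-(m / ((k:ℝ)+1)) * u ^ (k+1)) / (m * t ^ k))
    (g' := fun u : ℝ => u ^ k / t ^ k * Real.exp (-(m / ((k:ℝ)+1)) * u ^ (k+1)))
    (fun x hx => aux_d1 hm ht)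
    (fun x hx => by
      have hx0 : (0:ℝ) < x := ht.trans hx
      positivity)
    (aux_tendsto1 hm ht)
  rw [h]
  field_simp
  ring

lemma aux_I1 (hm : 0 < m) (ht : 0 < t) :
    IntegrableOn (fun u : ℝ => u ^ k / t ^ k * Real.exp (-(m / ((k:ℝ)+1)) * u ^ (k+1)))
      (Ioi t) :=
  integrableOn_Ioi_deriv_of_nonneg'
    (g := fun u : ℝ => -Real.exp (-(m / ((k:ℝ)+1)) * u ^ (k+1)) / (m * t ^ k))
    (fun x hx => aux_d1 hm ht)
    (fun x hx => by
      have hx0 : (0:ℝ) < x := ht.trans hx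
      positivity)
    (aux_tendsto1 hm ht)

lemma aux_d2 (hk : 1 ≤ k) (hm : 0 < m) {u : ℝ} (hu : 0 < u) :
    HasDerivAt (fun u : ℝ => -Real.exp (-(m / ((k:ℝ)+1)) * u ^ (k+1)) / (m * u ^ k))
      ((1 + k / (m * u ^ (k+1))) * Real.exp (-(m / ((k:ℝ)+1)) * u ^ (k+1))) u := by
  obtain ⟨j, rfl⟩ := Nat.exists_eq_add_of_le hk
  have hd : HasDerivAt (fun u : ℝ => m * u ^ (1+j)) (m * ((1+j) * u ^ j)) u := by
    simpa using (hasDerivAt_pow (1+j) u).const_mul m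
  have hden : m * u ^ (1+j) ≠ 0 := by positivity
  have := ((aux_deriv_exp (1+j) m u).neg).div hd hden
  refine this.congr_deriv ?_
  have h1 : (m : ℝ) ≠ 0 := hm.ne'
  have h2 : u ≠ 0 := hu.ne'
  simp only [Pi.neg_apply]
  push_cast
  field_simp
  ring

lemma aux_tendsto2 (hk : 1 ≤ k) (hm : 0 < m) :
    Tendsto (fun u : ℝ => -Real.exp (-(m / ((k:ℝ)+1)) * u ^ (k+1)) / (m * u ^ k))
      atTop (𝓝 0) := by
  have h1 : Tendsto (fun u : ℝ => (m * u ^ k)⁻¹) atTop (𝓝 0) := by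
    apply Tendsto.inv_tendsto_atTop
    exact (tendsto_pow_atTop (by omega)).const_mul_atTop hm
  have := ((aux_exp_tendsto k hm).neg).mul h1
  simpa [div_eq_mul_inv] using this

lemma aux_L2 (hk : 1 ≤ k) (hm : 0 < m) (ht : 0 < t) :
    (∫ u in Ioi t, (1 + k / (m * u ^ (k+1))) * Real.exp (-(m / ((k:ℝ)+1)) * u ^ (k+1)))
      = Real.exp (-(m / ((k:ℝ)+1)) * t ^ (k+1)) / (m * t ^ k) := by
  have h := integral_Ioi_of_hasDerivAt_of_nonneg'
    (g := fun u : ℝ => -Real.exp (-(m / ((k:ℝ)+1)) * u ^ (k+1)) / (m * u ^ k))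
    (g' := fun u : ℝ => (1 + k / (m * u ^ (k+1))) * Real.exp (-(m / ((k:ℝ)+1)) * u ^ (k+1)))
    (fun x hx => aux_d2 hk hm (ht.trans_le hx))
    (fun x hx => by
      have hx0 : (0:ℝ) < x := ht.trans hx
      positivity)
    (aux_tendsto2 hk hm)
  rw [h]
  field_simp
  ring

lemma aux_I2 (hk : 1 ≤ k) (hm : 0 < m) (ht : 0 < t) :
    IntegrableOn (fun u : ℝ => (1 + k / (m * u ^ (k+1))) * Real.exp (-(m / ((k:ℝ)+1)) * u ^ (k+1)))
      (Ioi t) :=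
  integrableOn_Ioi_deriv_of_nonneg'
    (g := fun u : ℝ => -Real.exp (-(m / ((k:ℝ)+1)) * u ^ (k+1)) / (m * u ^ k))
    (fun x hx => aux_d2 hk hm (ht.trans_le hx))
    (fun x hx => by
      have hx0 : (0:ℝ) < x := ht.trans hx
      positivity)
    (aux_tendsto2 hk hm)

end

section
variable {k : ℕ} {m t : ℝ}

lemma aux_tail_eq (hm : 0 < m) (ht : 0 ≤ t) :
    (∫ u in Ioi t, Real.exp (-(m / ((k:ℝ)+1)) * u ^ (k+1)))
      = CbetaK k m - PsiK k m t := by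
  have hI : IntegrableOn (fun u : ℝ => Real.exp (-(m / ((k:ℝ)+1)) * u ^ (k+1))) (Ioi 0) :=
    aux_int k hm
  have h1 : IntegrableOn (fun u : ℝ => Real.exp (-(m / ((k:ℝ)+1)) * u ^ (k+1))) (Ioc 0 t) :=
    hI.mono_set Ioc_subset_Ioi_self
  have h2 : IntegrableOn (fun u : ℝ => Real.exp (-(m / ((k:ℝ)+1)) * u ^ (k+1))) (Ioi t) :=
    hI.mono_set (Ioi_subset_Ioi ht)
  have hdisj : Disjoint (Ioc (0:ℝ) t) (Ioi t) := by
    apply disjoint_left.2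
    rintro x ⟨_, hx2⟩ hx3
    exact absurd hx3 (not_lt.2 hx2)
  have hu : Ioc (0:ℝ) t ∪ Ioi t = Ioi 0 := Ioc_union_Ioi_eq_Ioi ht
  have := setIntegral_union hdisj measurableSet_Ioi h1 h2
    (f := fun u : ℝ => Real.exp (-(m / ((k:ℝ)+1)) * u ^ (k+1)))
  rw [hu] at this
  have hPsi : PsiK k m t = ∫ u in Ioc (0:ℝ) t, Real.exp (-(m / ((k:ℝ)+1)) * u ^ (k+1)) := by
    rw [PsiK, intervalIntegral.integral_of_le ht]
  rw [CbetaK, this, hPsi]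
  ring

lemma aux_tail_pos (hm : 0 < m) (t : ℝ) :
    0 < ∫ u in Ioi t, Real.exp (-(m / ((k:ℝ)+1)) * u ^ (k+1)) := by
  have hI : IntegrableOn (fun u : ℝ => Real.exp (-(m / ((k:ℝ)+1)) * u ^ (k+1))) (Ioi t) := by
    rcases le_or_gt 0 t with h | h
    · exact (aux_int k hm).mono_set (Ioi_subset_Ioi h)
    · have : Ioi t = Ioc t 0 ∪ Ioi 0 := (Ioc_union_Ioi_eq_Ioi h.le).symm
      rw [this]
      exact IntegrableOn.union (Continuous.integrableOn_Ioc (by continuity)) (aux_int k hm)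
  rw [setIntegral_pos_iff_support_of_nonneg_ae _ hI]
  · have : Function.support (fun u : ℝ => Real.exp (-(m / ((k:ℝ)+1)) * u ^ (k+1))) = univ := by
      ext x; simp [Function.mem_support, (Real.exp_pos _).ne']
    rw [this, univ_inter, Real.volume_Ioi]
    simp
  · filter_upwards with x using (Real.exp_pos _).le

lemma aux_anti (hm : 0 < m) {t t' : ℝ} (ht : 0 ≤ t) (htt : t ≤ t') :
    (∫ u in Ioi t', Real.exp (-(m / ((k:ℝ)+1)) * u ^ (k+1)))
      ≤ ∫ u in Ioi t, Real.exp (-(m / ((k:ℝ)+1)) * u ^ (k+1)) := by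
  apply setIntegral_mono_set ((aux_int k hm).mono_set (Ioi_subset_Ioi ht))
  · filter_upwards with x using (Real.exp_pos _).le
  · exact (Ioi_subset_Ioi htt).eventuallyLE

end

-- limit helpers
lemma aux_hlog (k : ℕ) : Tendsto (fun x : ℝ => Real.log x / x ^ (k+1)) atTop (𝓝 0) := by
  have h0 : Tendsto (fun x : ℝ => Real.log x / x) atTop (𝓝 0) := by
    simpa using Real.isLittleO_log_id_atTop.tendsto_div_nhds_zero
  refine tendsto_of_tendsto_of_tendsto_of_le_of_le' tendsto_const_nhds h0 ?_ ?_
  · filter_upwards [eventually_ge_atTop (1:ℝ)] with x hx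
    have : (0:ℝ) ≤ Real.log x := Real.log_nonneg hx
    positivity
  · filter_upwards [eventually_ge_atTop (1:ℝ)] with x hx
    apply div_le_div_of_nonneg_left (Real.log_nonneg hx) (by linarith)
    exact le_self_pow₀ (by linarith) (Nat.succ_ne_zero k)

lemma aux_hinv (k : ℕ) : Tendsto (fun x : ℝ => (x ^ (k+1))⁻¹) atTop (𝓝 0) :=
  (tendsto_pow_atTop (Nat.succ_ne_zero k)).inv_tendsto_atTop

lemma aux_hphi (k : ℕ) {m : ℝ} (hm : 0 < m) (C : ℝ) :
    Tendsto (fun x : ℝ => (Real.log C + Real.log (m * x ^ k)) / x ^ (k+1)) atTop (𝓝 0) := by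
  have h1 : Tendsto (fun x : ℝ => (Real.log C + Real.log m) * (x ^ (k+1))⁻¹
      + (k : ℝ) * (Real.log x / x ^ (k+1))) atTop (𝓝 0) := by
    have := ((aux_hinv k).const_mul (Real.log C + Real.log m)).add ((aux_hlog k).const_mul (k:ℝ))
    simpa using this
  refine h1.congr' ?_
  filter_upwards [eventually_ge_atTop (1:ℝ)] with x hx
  have hx0 : (0:ℝ) < x := by linarith
  rw [Real.log_mul hm.ne' (by positivity), Real.log_pow]
  field_simp
  ring

lemma aux_hpsi (k : ℕ) {m : ℝ} (hm : 0 < m) :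
    Tendsto (fun x : ℝ => Real.log (1 + (k:ℝ) / (m * x ^ (k+1))) / x ^ (k+1)) atTop (𝓝 0) := by
  have hδ : Tendsto (fun x : ℝ => (k:ℝ) / (m * x ^ (k+1))) atTop (𝓝 0) := by
    have := (((tendsto_pow_atTop (Nat.succ_ne_zero k)).const_mul_atTop hm).inv_tendsto_atTop).const_mul (k:ℝ)
    simpa [div_eq_mul_inv] using this
  have hlog1 : Tendsto (fun x : ℝ => Real.log (1 + (k:ℝ) / (m * x ^ (k+1)))) atTop (𝓝 0) := by
    have hcont := (Real.continuousAt_log (x := (1:ℝ)) one_ne_zero).tendsto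
    have h2 : Tendsto (fun x : ℝ => 1 + (k:ℝ) / (m * x ^ (k+1))) atTop (𝓝 1) := by
      simpa using tendsto_const_nhds.add hδ
    simpa [Function.comp_def] using hcont.comp h2
  have := hlog1.mul (aux_hinv k)
  simpa [div_eq_mul_inv] using this

theorem stmt13 (k : ℕ) (hk : 1 ≤ k) (m : ℝ) (hm : 0 < m)
    (ts : ℝ → ℝ)
    (hts : ∀ s ∈ Set.Ioo (0:ℝ) 1, 0 ≤ ts s ∧ PsiK k m (ts s) = (1 - s) * CbetaK k m) :
    Tendsto (fun s : ℝ => (ts s) ^ (k + 1) / (-Real.log s))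
      (𝓝[>] (0:ℝ)) (𝓝 (((k:ℝ) + 1) / m)) := by
  have hC : 0 < CbetaK k m := by
    have h := aux_tail_pos (k := k) hm 0
    rw [aux_tail_eq hm le_rfl] at h
    simpa [PsiK] using h
  set C := CbetaK k m with hCdef
  have h_tail : ∀ s ∈ Ioo (0:ℝ) 1,
      (∫ u in Ioi (ts s), Real.exp (-(m / ((k:ℝ)+1)) * u ^ (k+1))) = s * C := by
    intro s hs
    obtain ⟨h0, h1⟩ := hts s hs
    rw [aux_tail_eq hm h0, h1]
    ring
  have h_top : Tendsto ts (𝓝[>] (0:ℝ)) atTop := by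
    rw [tendsto_atTop]
    intro b
    set T := max b 1 with hTdef
    have hTpos := aux_tail_pos (k := k) hm T
    set ε := (∫ u in Ioi T, Real.exp (-(m / ((k:ℝ)+1)) * u ^ (k+1))) / C with hε
    have hε0 : 0 < ε := div_pos hTpos hC
    have hmem : Ioo (0:ℝ) (min 1 ε) ∈ 𝓝[>] (0:ℝ) :=
      Ioo_mem_nhdsGT_of_mem ⟨le_rfl, lt_min one_pos hε0⟩
    filter_upwards [hmem] with s hs
    have hs1 : s ∈ Ioo (0:ℝ) 1 := ⟨hs.1, hs.2.trans_le (min_le_left _ _)⟩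
    have h2 := h_tail s hs1
    by_contra hcon
    push_neg at hcon
    have h3 : ts s ≤ T := le_trans hcon.le (le_max_left _ _)
    have h4 := aux_anti (k := k) hm (hts s hs1).1 h3
    rw [h2] at h4
    have h5 : s * C < ε * C :=
      mul_lt_mul_of_pos_right (hs.2.trans_le (min_le_right _ _)) hC
    rw [hε, div_mul_cancel₀ _ hC.ne'] at h5
    linarith
  set a := m / ((k:ℝ)+1) with hadef
  have ha : 0 < a := by positivity
  set φ : ℝ → ℝ := fun x => (Real.log C + Real.log (m * x ^ k)) / x ^ (k+1) with hφdef
  set ψ : ℝ → ℝ := fun x => Real.log (1 + (k:ℝ) / (m * x ^ (k+1))) / x ^ (k+1) with hψdef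
  -- squeeze
  have key : ∀ᶠ s in 𝓝[>] (0:ℝ),
      (a + φ (ts s) ≤ (-Real.log s) / (ts s) ^ (k+1)) ∧
      ((-Real.log s) / (ts s) ^ (k+1) ≤ a + φ (ts s) + ψ (ts s)) := by
    filter_upwards [Ioo_mem_nhdsGT_of_mem (Set.left_mem_Ico.2 one_pos),
      h_top.eventually (eventually_ge_atTop (1:ℝ))] with s hs hx1
    set x := ts s with hxdef
    have hx0 : (0:ℝ) < x := lt_of_lt_of_le one_pos hx1
    have hxp : (0:ℝ) < x ^ (k+1) := by positivity
    have hmxk : (0:ℝ) < m * x ^ k := by positivity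
    have hsC : 0 < s * C := mul_pos hs.1 hC
    have htl := h_tail s hs
    -- upper bound : s*C ≤ E x
    have hU : s * C ≤ Real.exp (-(m / ((k:ℝ)+1)) * x ^ (k+1)) / (m * x ^ k) := by
      rw [← htl, ← aux_L1 hm hx0]
      apply setIntegral_mono_on ((aux_int k hm).mono_set (Ioi_subset_Ioi hx0.le))
        (aux_I1 hm hx0) measurableSet_Ioi
      intro u hu
      have hux : x ≤ u := (le_of_lt hu)
      have h1 : (1:ℝ) ≤ u ^ k / x ^ k := by
        rw [le_div_iff₀ (by positivity), one_mul]
        exact pow_le_pow_left₀ hx0.le hux k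
      nlinarith [Real.exp_pos (-(m / ((k:ℝ)+1)) * u ^ (k+1))]
    -- lower bound : E x ≤ (1+δ) * (s*C)
    have hL : Real.exp (-(m / ((k:ℝ)+1)) * x ^ (k+1)) / (m * x ^ k)
        ≤ (1 + (k:ℝ) / (m * x ^ (k+1))) * (s * C) := by
      rw [← htl, ← aux_L2 hk hm hx0, ← integral_const_mul]
      apply setIntegral_mono_on (aux_I2 hk hm hx0)
        (((aux_int k hm).mono_set (Ioi_subset_Ioi hx0.le)).const_mul _) measurableSet_Ioi
      intro u hu
      have hux : x ≤ u := le_of_lt hu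
      have h1 : (k:ℝ) / (m * u ^ (k+1)) ≤ (k:ℝ) / (m * x ^ (k+1)) := by
        gcongr
      have h2 := (Real.exp_pos (-(m / ((k:ℝ)+1)) * u ^ (k+1))).le
      nlinarith
    have hδpos : (0:ℝ) < 1 + (k:ℝ) / (m * x ^ (k+1)) := by positivity
    have hlogE : Real.log (Real.exp (-(m / ((k:ℝ)+1)) * x ^ (k+1)) / (m * x ^ k))
        = -(a * x ^ (k+1)) - Real.log (m * x ^ k) := by
      rw [Real.log_div (Real.exp_ne_zero _) hmxk.ne', Real.log_exp, hadef]
      ring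
    have hlogU := Real.log_le_log hsC hU
    rw [hlogE, Real.log_mul hs.1.ne' hC.ne'] at hlogU
    have hlogL := Real.log_le_log (show (0:ℝ) < Real.exp (-(m / ((k:ℝ)+1)) * x ^ (k+1)) / (m * x ^ k) by positivity) hL
    rw [hlogE, Real.log_mul hδpos.ne' hsC.ne', Real.log_mul hs.1.ne' hC.ne'] at hlogL
    constructor
    · have heq : a + φ x = (a * x ^ (k+1) + (Real.log C + Real.log (m * x ^ k))) / x ^ (k+1) := by
        simp only [hφdef]
        field_simp
      rw [heq]
      gcongr
      linarith
    · have heq : a + φ x + ψ x = (a * x ^ (k+1) + (Real.log C + Real.log (m * x ^ k))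
          + Real.log (1 + (k:ℝ) / (m * x ^ (k+1)))) / x ^ (k+1) := by
        simp only [hφdef, hψdef]
        field_simp
      rw [heq]
      gcongr
      linarith
  have hr : Tendsto (fun s : ℝ => (-Real.log s) / (ts s) ^ (k+1)) (𝓝[>] (0:ℝ)) (𝓝 a) := by
    have hg : Tendsto (fun s : ℝ => a + φ (ts s)) (𝓝[>] (0:ℝ)) (𝓝 a) := by
      simpa using tendsto_const_nhds.add ((aux_hphi k hm C).comp h_top)
    have hh : Tendsto (fun s : ℝ => a + φ (ts s) + ψ (ts s)) (𝓝[>] (0:ℝ)) (𝓝 a) := by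
      simpa using hg.add ((aux_hpsi k hm).comp h_top)
    exact tendsto_of_tendsto_of_tendsto_of_le_of_le' hg hh
      (key.mono fun s h => h.1) (key.mono fun s h => h.2)
  have := hr.inv₀ ha.ne'
  rw [hadef, inv_div] at this
  refine this.congr fun s => ?_
  rw [inv_div]
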